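/- Correctness of the table-based bit count (ANS-AI encoder, Lemma 2): let k be the integer such that P_x · 2^k ∈ [2^M, 2^{M+1}), where 1 ≤ P_x < 2^{M-1} (hence 2 ≤ k ≤ M). Define δ = k·2^M - P_x·2^k. Then for all S ∈ [2^M, 2^{M+1}): ⌊(δ + S)/2^M⌋ = k if S ∈ [P_x·2^k, 2^{M+1}), and ⌊(δ + S)/2^M⌋ = k - 1 if S ∈ [2^M, P_x·2^k). -/
import Mathlib


/-- Correctness of the table-based bit count in the ANS-AI encoder (Lemma 2). -/
theorem ansai_table_bit_count_correct
    (M Px k : ℕ) (hM : 2 ≤ M)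
    (hP : 1 ≤ Px ∧ Px < 2 ^ (M - 1))
    (hk : 2 ^ M ≤ Px * 2 ^ k ∧ Px * 2 ^ k < 2 ^ (M + 1))
    (δ : ℕ) (hδ : δ = k * 2 ^ M - Px * 2 ^ k) :
    ∀ S : ℕ, 2 ^ M ≤ S → S < 2 ^ (M + 1) →
      (Px * 2 ^ k ≤ S → (δ + S) / 2 ^ M = k) ∧
      (S < Px * 2 ^ k → (δ + S) / 2 ^ M = k - 1) := by
  intro S hS1 hS2
  set b := 2 ^ M with hb
  set a := Px * 2 ^ k with ha
  -- k ≥ 2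
  have hlt : a < 2 ^ (M - 1 + k) := by
    rw [pow_add, ha]
    exact Nat.mul_lt_mul_of_lt_of_le hP.2 le_rfl (Nat.pos_of_ne_zero (by positivity))
  have hk2 : 2 ≤ k := by
    have : 2 ^ M < 2 ^ (M - 1 + k) := lt_of_le_of_lt hk.1 hlt
    have := (Nat.pow_lt_pow_iff_right (by norm_num : 1 < 2)).mp this
    omega
  have h2b : 2 ^ (M + 1) = 2 * b := by rw [pow_succ]; ring
  have hab2 : a < 2 * b := by rw [← h2b]; exact hk.2
  set c := k * b with hc
  have hac : a ≤ c := by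
    have : 2 * b ≤ k * b := Nat.mul_le_mul_right b hk2
    omega
  have hba : b ≤ a := hk.1
  have hSb : S < 2 * b := by rw [← h2b]; exact hS2
  constructor
  · intro hle
    apply Nat.div_eq_of_lt_le
    · omega
    · have : (k + 1) * b = c + b := by rw [hc]; ring
      omega
  · intro hltS
    have hkb : (k - 1) * b = c - b := by
      rw [hc, Nat.sub_mul, one_mul]
    apply Nat.div_eq_of_lt_le
    · omega
    · have : (k - 1 + 1) * b = c := by
        have : k - 1 + 1 = k := by omega
        rw [this]
      omega
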